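/- Let A be a commutative ring, M an A-module, and x, y_1,...,y_n ∈ A. If x is a regular element on M (i.e. multiplication by x is injective on M), then for all i there is an isomorphism H_i(x, y_1,...,y_n; M) ≅ H_i(y_1,...,y_n; M/xM). -/

import Mathlib

open CategoryTheory

/-- The Koszul complex of a list of elements of `A` with coefficients in the module `M`,
realized as a cochain complex with `K_i` placed in cohomological degree `-i`,
built by iterated mapping cones: `K(a :: xs; M) = cone(a • 𝟙 (K(xs; M)))`. -/
noncomputable def koszulComplex (A : Type) [CommRing A] (M : ModuleCat A) :
    List A → CochainComplex (ModuleCat A) ℤ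
  | [] => (HomologicalComplex.single (ModuleCat A) (ComplexShape.up ℤ) 0).obj M
  | a :: xs => CochainComplex.mappingCone (a • 𝟙 (koszulComplex A M xs))


open Pointwise

noncomputable def koszulMap (A : Type) [CommRing A] {M N : ModuleCat A} (f : M ⟶ N) :
    (ys : List A) → (koszulComplex A M ys ⟶ koszulComplex A N ys)
  | [] => (HomologicalComplex.single (ModuleCat A) (ComplexShape.up ℤ) 0).map f
  | a :: xs => CochainComplex.mappingCone.map _ _ (koszulMap A f xs) (koszulMap A f xs)
      (by rw [Linear.comp_smul, Linear.smul_comp, Category.id_comp, Category.comp_id])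

lemma koszulMap_comp (A : Type) [CommRing A] {M N P : ModuleCat A} (f : M ⟶ N) (g : N ⟶ P)
    (ys : List A) : koszulMap A f ys ≫ koszulMap A g ys = koszulMap A (f ≫ g) ys := by
  induction ys with
  | nil => exact ((HomologicalComplex.single (ModuleCat A) (ComplexShape.up ℤ) 0).map_comp f g).symm
  | cons a xs ih =>
      rw [koszulMap, koszulMap, koszulMap]
      erw [← CochainComplex.mappingCone.map_comp]
      congr 1

open CochainComplex in
lemma koszulMap_zero (A : Type) [CommRing A] {M N : ModuleCat A} (ys : List A) :
    koszulMap A (0 : M ⟶ N) ys = 0 := by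
  induction ys with
  | nil => exact (HomologicalComplex.single (ModuleCat A) (ComplexShape.up ℤ) 0).map_zero M N
  | cons a xs ih =>
      rw [koszulMap]
      refine HomologicalComplex.hom_ext _ _ (fun n => ?_)
      rw [CochainComplex.mappingCone.ext_from_iff _ (n+1) n rfl]
      constructor <;> simp [CochainComplex.mappingCone.map, ih] <;> exact Limits.comp_zero.symm

open CochainComplex in
lemma koszulMap_smul_id (A : Type) [CommRing A] {M : ModuleCat A} (x : A) (ys : List A) :
    koszulMap A (x • 𝟙 M) ys = x • 𝟙 (koszulComplex A M ys) := by
  induction ys with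
  | nil =>
      refine HomologicalComplex.hom_ext _ _ (fun n => ?_)
      by_cases h : n = 0
      · subst h
        rw [show koszulMap A (x • 𝟙 M) [] =
            (HomologicalComplex.single (ModuleCat A) (ComplexShape.up ℤ) 0).map (x • 𝟙 M) from rfl,
          HomologicalComplex.single_map_f_self]
        simp
        rfl
      · apply (HomologicalComplex.isZero_single_obj_X (ComplexShape.up ℤ) 0 M n h).eq_of_src
  | cons a xs ih =>
      rw [koszulMap]
      show _ = x • 𝟙 (CochainComplex.mappingCone (a • 𝟙 (koszulComplex A M xs)))
      refine HomologicalComplex.hom_ext _ _ (fun n => ?_)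
      rw [CochainComplex.mappingCone.ext_from_iff _ (n+1) n rfl]
      constructor <;>
        simp [CochainComplex.mappingCone.map, ih, Linear.smul_comp, Linear.comp_smul]

namespace CochainComplex.mappingCone
open HomologicalComplex

variable {C : Type*} [Category C] [Preadditive C] [Limits.HasBinaryBiproducts C]
  {F₁ G₁ F₂ G₂ : CochainComplex C ℤ} (φ₁ : F₁ ⟶ G₁) (φ₂ : F₂ ⟶ G₂)
  (a : F₁ ⟶ F₂) (b : G₁ ⟶ G₂)

lemma inl_v_map_f' (comm : φ₁ ≫ b = a ≫ φ₂) (i : ℤ) :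
    (inl φ₁).v (i+1) i (by omega) ≫ (map φ₁ φ₂ a b comm).f i =
      a.f (i+1) ≫ (inl φ₂).v (i+1) i (by omega) := by
  simp [map]

lemma inr_f_map_f' (comm : φ₁ ≫ b = a ≫ φ₂) (i : ℤ) :
    (inr φ₁).f i ≫ (map φ₁ φ₂ a b comm).f i = b.f i ≫ (inr φ₂).f i := by
  simp [map]

lemma map_f_fst_v' (comm : φ₁ ≫ b = a ≫ φ₂) (i : ℤ) :
    (map φ₁ φ₂ a b comm).f i ≫ (fst φ₂).1.v i (i+1) rfl =
      (fst φ₁).1.v i (i+1) rfl ≫ a.f (i+1) := by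
  rw [ext_from_iff _ (i+1) i rfl]
  constructor
  · rw [reassoc_of% (inl_v_map_f' φ₁ φ₂ a b comm i)]
    simp
  · rw [reassoc_of% (inr_f_map_f' φ₁ φ₂ a b comm i)]
    simp

lemma map_f_snd_v' (comm : φ₁ ≫ b = a ≫ φ₂) (i : ℤ) :
    (map φ₁ φ₂ a b comm).f i ≫ (snd φ₂).v i i (add_zero i) =
      (snd φ₁).v i i (add_zero i) ≫ b.f i := by
  rw [ext_from_iff _ (i+1) i rfl]
  constructor
  · rw [reassoc_of% (inl_v_map_f' φ₁ φ₂ a b comm i)]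
    simp
  · rw [reassoc_of% (inr_f_map_f' φ₁ φ₂ a b comm i)]
    simp

end CochainComplex.mappingCone

lemma ModuleCat.eq_zero_of_isZero {A : Type} [CommRing A] {X : ModuleCat A}
    (h : Limits.IsZero X) (z : X) : z = 0 := by
  have h0 : (𝟙 X : X ⟶ X) = 0 := h.eq_of_src _ _
  have := congrArg (fun φ => φ.hom z) h0
  simpa [ModuleCat.hom_id, ModuleCat.hom_zero] using this

open CochainComplex CochainComplex.mappingCone in
lemma koszul_aux (A : Type) [CommRing A] {M₁ M₂ M₃ : ModuleCat A} (f : M₁ ⟶ M₂) (g : M₂ ⟶ M₃)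
    (hf : Function.Injective f) (hg : Function.Surjective g)
    (hfg : ∀ m, g m = 0 → ∃ m', f m' = m) (ys : List A) :
    ∀ i : ℤ, Function.Injective ((koszulMap A f ys).f i) ∧
      Function.Surjective ((koszulMap A g ys).f i) ∧
      (∀ z, (koszulMap A g ys).f i z = 0 → ∃ w, (koszulMap A f ys).f i w = z) := by
  induction ys with
  | nil =>
      intro i
      by_cases h : i = 0
      · subst h
        rw [show koszulMap A f [] =
            (HomologicalComplex.single (ModuleCat A) (ComplexShape.up ℤ) 0).map f from rfl,
          show koszulMap A g [] =
            (HomologicalComplex.single (ModuleCat A) (ComplexShape.up ℤ) 0).map g from rfl,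
          HomologicalComplex.single_map_f_self, HomologicalComplex.single_map_f_self]
        set e₁ := HomologicalComplex.singleObjXSelf (ComplexShape.up ℤ) 0 M₁ with he₁
        set e₂ := HomologicalComplex.singleObjXSelf (ComplexShape.up ℤ) 0 M₂ with he₂
        set e₃ := HomologicalComplex.singleObjXSelf (ComplexShape.up ℤ) 0 M₃ with he₃
        refine ⟨?_, ?_, ?_⟩
        · intro z w h
          simp only [CategoryTheory.comp_apply] at h
          exact e₁.toLinearEquiv.injective (hf (e₂.toLinearEquiv.symm.injective h))
        · intro z
          obtain ⟨m, hm⟩ := hg (e₃.toLinearEquiv z)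
          refine ⟨e₂.toLinearEquiv.symm m, ?_⟩
          show e₃.toLinearEquiv.symm (g (e₂.toLinearEquiv (e₂.toLinearEquiv.symm m))) = z
          rw [LinearEquiv.apply_symm_apply, hm]
          exact e₃.toLinearEquiv.symm_apply_apply z
        · intro z hz
          simp only [CategoryTheory.comp_apply] at hz
          have hgz : g (e₂.hom z) = 0 := by
            have : e₃.inv (g (e₂.hom z)) = e₃.inv 0 := by rw [map_zero]; exact hz
            exact e₃.toLinearEquiv.symm.injective this
          obtain ⟨m', hm'⟩ := hfg _ hgz
          refine ⟨e₁.toLinearEquiv.symm m', ?_⟩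
          show e₂.toLinearEquiv.symm (f (e₁.toLinearEquiv (e₁.toLinearEquiv.symm m'))) = z
          rw [LinearEquiv.apply_symm_apply, hm']
          exact e₂.toLinearEquiv.symm_apply_apply z
      · have z₁ := HomologicalComplex.isZero_single_obj_X (ComplexShape.up ℤ) 0 M₁ i h
        have z₂ := HomologicalComplex.isZero_single_obj_X (ComplexShape.up ℤ) 0 M₂ i h
        have z₃ := HomologicalComplex.isZero_single_obj_X (ComplexShape.up ℤ) 0 M₃ i h
        refine ⟨?_, ?_, ?_⟩
        · intro z w _
          rw [ModuleCat.eq_zero_of_isZero z₁ z, ModuleCat.eq_zero_of_isZero z₁ w]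
        · intro z
          exact ⟨0, (ModuleCat.eq_zero_of_isZero z₃ _).trans
            (ModuleCat.eq_zero_of_isZero z₃ z).symm⟩
        · intro z _
          exact ⟨0, (ModuleCat.eq_zero_of_isZero z₂ _).trans
            (ModuleCat.eq_zero_of_isZero z₂ z).symm⟩
  | cons a xs ih =>
      intro i
      obtain ⟨ihinj', ihsur', ihex'⟩ := ih (i+1)
      obtain ⟨ihinj, ihsur, ihex⟩ := ih i
      set φ₁ := a • 𝟙 (koszulComplex A M₁ xs) with hφ₁
      set φ₂ := a • 𝟙 (koszulComplex A M₂ xs) with hφ₂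
      set φ₃ := a • 𝟙 (koszulComplex A M₃ xs) with hφ₃
      have comm₁ : φ₁ ≫ koszulMap A f xs = koszulMap A f xs ≫ φ₂ := by
        rw [hφ₁, hφ₂, Linear.comp_smul, Linear.smul_comp, Category.id_comp, Category.comp_id]
      have comm₂ : φ₂ ≫ koszulMap A g xs = koszulMap A g xs ≫ φ₃ := by
        rw [hφ₂, hφ₃, Linear.comp_smul, Linear.smul_comp, Category.id_comp, Category.comp_id]
      have ef : koszulMap A f (a :: xs) =
          mappingCone.map φ₁ φ₂ (koszulMap A f xs) (koszulMap A f xs) comm₁ := rfl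
      have eg : koszulMap A g (a :: xs) =
          mappingCone.map φ₂ φ₃ (koszulMap A g xs) (koszulMap A g xs) comm₂ := rfl
      -- elementwise component lemmas
      have hffst : ∀ z, (fst φ₂).1.v i (i+1) rfl ((koszulMap A f (a :: xs)).f i z) =
          (koszulMap A f xs).f (i+1) ((fst φ₁).1.v i (i+1) rfl z) := by
        intro z
        have h := ConcreteCategory.congr_hom
          (map_f_fst_v' φ₁ φ₂ (koszulMap A f xs) (koszulMap A f xs) comm₁ i) z
        rw [ef]
        exact h
      have hfsnd : ∀ z, (snd φ₂).v i i (add_zero i) ((koszulMap A f (a :: xs)).f i z) =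
          (koszulMap A f xs).f i ((snd φ₁).v i i (add_zero i) z) := by
        intro z
        have h := ConcreteCategory.congr_hom
          (map_f_snd_v' φ₁ φ₂ (koszulMap A f xs) (koszulMap A f xs) comm₁ i) z
        rw [ef]
        exact h
      have hgfst : ∀ z, (fst φ₃).1.v i (i+1) rfl ((koszulMap A g (a :: xs)).f i z) =
          (koszulMap A g xs).f (i+1) ((fst φ₂).1.v i (i+1) rfl z) := by
        intro z
        have h := ConcreteCategory.congr_hom
          (map_f_fst_v' φ₂ φ₃ (koszulMap A g xs) (koszulMap A g xs) comm₂ i) z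
        rw [eg]
        exact h
      have hgsnd : ∀ z, (snd φ₃).v i i (add_zero i) ((koszulMap A g (a :: xs)).f i z) =
          (koszulMap A g xs).f i ((snd φ₂).v i i (add_zero i) z) := by
        intro z
        have h := ConcreteCategory.congr_hom
          (map_f_snd_v' φ₂ φ₃ (koszulMap A g xs) (koszulMap A g xs) comm₂ i) z
        rw [eg]
        exact h
      have hfinl : ∀ u, (koszulMap A f (a :: xs)).f i ((inl φ₁).v (i+1) i (by omega) u) =
          (inl φ₂).v (i+1) i (by omega) ((koszulMap A f xs).f (i+1) u) := by
        intro u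
        have h := ConcreteCategory.congr_hom
          (inl_v_map_f' φ₁ φ₂ (koszulMap A f xs) (koszulMap A f xs) comm₁ i) u
        rw [ef]
        exact h
      have hfinr : ∀ u, (koszulMap A f (a :: xs)).f i ((inr φ₁).f i u) =
          (inr φ₂).f i ((koszulMap A f xs).f i u) := by
        intro u
        have h := ConcreteCategory.congr_hom
          (inr_f_map_f' φ₁ φ₂ (koszulMap A f xs) (koszulMap A f xs) comm₁ i) u
        rw [ef]
        exact h
      have hginl : ∀ u, (koszulMap A g (a :: xs)).f i ((inl φ₂).v (i+1) i (by omega) u) =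
          (inl φ₃).v (i+1) i (by omega) ((koszulMap A g xs).f (i+1) u) := by
        intro u
        have h := ConcreteCategory.congr_hom
          (inl_v_map_f' φ₂ φ₃ (koszulMap A g xs) (koszulMap A g xs) comm₂ i) u
        rw [eg]
        exact h
      have hginr : ∀ u, (koszulMap A g (a :: xs)).f i ((inr φ₂).f i u) =
          (inr φ₃).f i ((koszulMap A g xs).f i u) := by
        intro u
        have h := ConcreteCategory.congr_hom
          (inr_f_map_f' φ₂ φ₃ (koszulMap A g xs) (koszulMap A g xs) comm₂ i) u
        rw [eg]
        exact h
      -- decompositions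
      have hdec₁ : ∀ z, (inl φ₁).v (i+1) i (by omega) ((fst φ₁).1.v i (i+1) rfl z) +
          (inr φ₁).f i ((snd φ₁).v i i (add_zero i) z) = z := by
        intro z
        have h := ConcreteCategory.congr_hom (id_X φ₁ i (i+1) rfl) z
        simpa only [CategoryTheory.comp_apply, ModuleCat.hom_add, LinearMap.add_apply, CategoryTheory.id_apply] using h
      have hdec₂ : ∀ z, (inl φ₂).v (i+1) i (by omega) ((fst φ₂).1.v i (i+1) rfl z) +
          (inr φ₂).f i ((snd φ₂).v i i (add_zero i) z) = z := by
        intro z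
        have h := ConcreteCategory.congr_hom (id_X φ₂ i (i+1) rfl) z
        simpa only [CategoryTheory.comp_apply, ModuleCat.hom_add, LinearMap.add_apply, CategoryTheory.id_apply] using h
      have hdec₃ : ∀ z, (inl φ₃).v (i+1) i (by omega) ((fst φ₃).1.v i (i+1) rfl z) +
          (inr φ₃).f i ((snd φ₃).v i i (add_zero i) z) = z := by
        intro z
        have h := ConcreteCategory.congr_hom (id_X φ₃ i (i+1) rfl) z
        simpa only [CategoryTheory.comp_apply, ModuleCat.hom_add, LinearMap.add_apply, CategoryTheory.id_apply] using h
      refine ⟨?_, ?_, ?_⟩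
      · -- injectivity
        intro z w h
        have hzw : (koszulMap A f (a :: xs)).f i (z - w) = 0 := by
          rw [map_sub, h, sub_self]
        have h1 : (fst φ₁).1.v i (i+1) rfl (z - w) = 0 := by
          apply ihinj'
          rw [← hffst, hzw, map_zero]
          exact map_zero _
        have h2 : (snd φ₁).v i i (add_zero i) (z - w) = 0 := by
          apply ihinj
          rw [← hfsnd, hzw, map_zero]
          exact map_zero _
        have := hdec₁ (z - w)
        rw [h1, h2, map_zero, map_zero, add_zero] at this
        exact sub_eq_zero.mp this.symm
      · -- surjectivity
        intro z
        obtain ⟨u, hu⟩ := ihsur' ((fst φ₃).1.v i (i+1) rfl z)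
        obtain ⟨v, hv⟩ := ihsur ((snd φ₃).v i i (add_zero i) z)
        refine ⟨(inl φ₂).v (i+1) i (by omega) u + (inr φ₂).f i v, ?_⟩
        refine (map_add _ _ _).trans ?_
        rw [hginl, hginr, hu, hv]
        exact hdec₃ z
      · -- exactness
        intro z hz
        have h1 : (koszulMap A g xs).f (i+1) ((fst φ₂).1.v i (i+1) rfl z) = 0 := by
          rw [← hgfst, hz]
          exact map_zero _
        have h2 : (koszulMap A g xs).f i ((snd φ₂).v i i (add_zero i) z) = 0 := by
          rw [← hgsnd, hz]
          exact map_zero _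
        obtain ⟨u, hu⟩ := ihex' _ h1
        obtain ⟨v, hv⟩ := ihex _ h2
        refine ⟨(inl φ₁).v (i+1) i (by omega) u + (inr φ₁).f i v, ?_⟩
        refine (map_add _ _ _).trans ?_
        rw [hfinl, hfinr, hu, hv]
        exact hdec₂ z

/-- The `i`-th Koszul homology module `H_i(x₁,...,xₙ; M)`. -/
noncomputable def koszulHomology (A : Type) [CommRing A] (M : ModuleCat A)
    (xs : List A) (i : ℕ) : ModuleCat A :=
  (koszulComplex A M xs).homology (-(i : ℤ))

/-- If `x` is a regular element on `M`, then
`Hᵢ(x, y₁,...,yₙ; M) ≅ Hᵢ(y₁,...,yₙ; M/xM)` for all `i`. -/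
theorem koszul_homology_quotient_of_regular
    (A : Type) [CommRing A] (M : Type) [AddCommGroup M] [Module A M]
    (x : A) (hx : IsSMulRegular M x) (n : ℕ) (y : Fin n → A) (i : ℕ) :
    Nonempty (↥(koszulHomology A (ModuleCat.of A M) (x :: List.ofFn y) i) ≃ₗ[A]
      ↥(koszulHomology A (ModuleCat.of A (QuotSMulTop x M)) (List.ofFn y) i)) := by
  set ys := List.ofFn y with hys
  set Mc := ModuleCat.of A M with hMc
  set K := koszulComplex A Mc ys with hK
  let g₀ : Mc ⟶ ModuleCat.of A (QuotSMulTop x M) := ModuleCat.ofHom (x • (⊤ : Submodule A M)).mkQ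
  have hinj₀ : Function.Injective (x • 𝟙 Mc) := fun m m' h => hx h
  have hsur₀ : Function.Surjective g₀ := Submodule.mkQ_surjective _
  have hex₀ : ∀ m, g₀ m = 0 → ∃ m', (x • 𝟙 Mc) m' = m := by
    intro m hm
    have hmem : m ∈ x • (⊤ : Submodule A M) := (Submodule.Quotient.mk_eq_zero _).mp hm
    rw [← SetLike.mem_coe, Submodule.coe_pointwise_smul] at hmem
    obtain ⟨m', -, hm'⟩ := hmem
    exact ⟨m', hm'⟩
  have hcomp : (x • 𝟙 Mc) ≫ g₀ = 0 := by
    apply ModuleCat.hom_ext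
    apply LinearMap.ext
    intro m
    show g₀ (x • m) = 0
    rw [show g₀ (x • m) = Submodule.Quotient.mk (x • m) from rfl,
      Submodule.Quotient.mk_eq_zero]
    exact Submodule.smul_mem_pointwise_smul m x ⊤ trivial
  have hzero : (x • 𝟙 K) ≫ koszulMap A g₀ ys = 0 := by
    rw [← koszulMap_smul_id, koszulMap_comp, hcomp, koszulMap_zero]
  set S : ShortComplex (CochainComplex (ModuleCat A) ℤ) := ShortComplex.mk _ _ hzero with hS0
  have hS : S.ShortExact := by
    rw [HomologicalComplex.shortExact_iff_degreewise_shortExact]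
    intro j
    obtain ⟨hinj, hsur, hex⟩ := koszul_aux A (x • 𝟙 Mc) g₀ hinj₀ hsur₀ hex₀ ys j
    rw [koszulMap_smul_id] at hinj hex
    refine { exact := ?_, mono_f := ?_, epi_g := ?_ }
    · rw [ShortComplex.moduleCat_exact_iff]
      intro z hz
      exact hex z hz
    · exact (ModuleCat.mono_iff_injective _).mpr hinj
    · exact (ModuleCat.epi_iff_surjective _).mpr hsur
  have hq := CochainComplex.mappingCone.quasiIso_descShortComplex hS
  have hiso : IsIso (HomologicalComplex.homologyMap
      (CochainComplex.mappingCone.descShortComplex S) (-(i : ℤ))) := by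
    rw [← quasiIsoAt_iff_isIso_homologyMap]
    infer_instance
  exact ⟨(asIso (HomologicalComplex.homologyMap
    (CochainComplex.mappingCone.descShortComplex S) (-(i : ℤ)))).toLinearEquiv⟩
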